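/- Let T = (L, R, τ) be a rewrite rule (without cloning) and m : L → G a graph morphism whose underlying function on nodes is injective. If (H, τ₁, d) is a heterogeneous pushout of T and m, then d : R → H has injective underlying node function, i.e. d is itself a matching of R. -/

import Mathlib

/-!
Termgraphs over a signature `Ω` with arity function `ar`.
A termgraph has a type of nodes `N`; a node `n` is *labeled* when `label n = some ω`,
and then its successor string `succ n` has length `ar ω`; unlabeled nodes have an
empty successor string (the successor function is only meaningful on labeled nodes).
-/

universe u

structure TermGraph (Ω : Type u) (ar : Ω → ℕ) : Type (u + 1) where
  N : Type u
  label : N → Option Ω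
  succ : N → List N
  arity_eq : ∀ n : N, (succ n).length = ((label n).map ar).getD 0

namespace TermGraph

variable {Ω : Type u} {ar : Ω → ℕ}

/-- A graph morphism: preserves labeled nodes, labels and successors. -/
structure Hom (G H : TermGraph Ω ar) : Type u where
  toFun : G.N → H.N
  label_eq : ∀ (n : G.N) (ω : Ω), G.label n = some ω → H.label (toFun n) = some ω
  succ_eq : ∀ (n : G.N) (ω : Ω), G.label n = some ω →
    H.succ (toFun n) = (G.succ n).map toFun

/-- `γ` is graphic at `n`: either `n` is unlabeled, or both `n` and `γ n` are labeled
with the same label and corresponding successors. -/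
def GraphicAt (G H : TermGraph Ω ar) (γ : G.N → H.N) (n : G.N) : Prop :=
  ∀ ω : Ω, G.label n = some ω →
    H.label (γ n) = some ω ∧ H.succ (γ n) = (G.succ n).map γ

/-- `γ` is strictly graphic at `n`: either both `n` and `γ n` are unlabeled, or both
are labeled with the same label and corresponding successors.  (When both are
unlabeled both successor strings are empty, so the successor condition is harmless.) -/
def StrictGraphicAt (G H : TermGraph Ω ar) (γ : G.N → H.N) (n : G.N) : Prop :=
  H.label (γ n) = G.label n ∧ H.succ (γ n) = (G.succ n).map γ

def GraphicOn (G H : TermGraph Ω ar) (γ : G.N → H.N) (Γ : Set G.N) : Prop :=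
  ∀ n ∈ Γ, GraphicAt G H γ n

def StrictGraphicOn (G H : TermGraph Ω ar) (γ : G.N → H.N) (Γ : Set G.N) : Prop :=
  ∀ n ∈ Γ, StrictGraphicAt G H γ n

/-- `p ∈ |H|` is a `τ`-clone of `q ∈ |G|` (for `τ : |G| → |H|`): `p` is labeled iff
`q` is labeled, and then they carry the same label and `𝓢_H p = τ*(𝓢_G q)`. -/
def IsClone (G H : TermGraph Ω ar) (τ : G.N → H.N) (p : H.N) (q : G.N) : Prop :=
  H.label p = G.label q ∧ H.succ p = (G.succ q).map τ

end TermGraph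

open TermGraph

/-- `(H, τ₁, d)` is a heterogeneous cone over the rewrite rule (without cloning)
`(L, R, τ)` and the graph morphism `m : L → G`: `|d| ∘ τ = τ₁ ∘ |m|` and `τ₁` is
graphic on `|G| − |m(L)|`. -/
def IsHetCone {Ω : Type u} {ar : Ω → ℕ} (L R G : TermGraph Ω ar)
    (τ : L.N → R.N) (m : Hom L G)
    (H : TermGraph Ω ar) (τ₁ : G.N → H.N) (d : Hom R H) : Prop :=
  d.toFun ∘ τ = τ₁ ∘ m.toFun ∧ GraphicOn G H τ₁ ((Set.range m.toFun)ᶜ)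

/-- `h` is a morphism of heterogeneous cones from `(H, τ₁, d)` to `(H', τ₁', d')`. -/
def IsHetConeMorphism {Ω : Type u} {ar : Ω → ℕ} {R G H H' : TermGraph Ω ar}
    (τ₁ : G.N → H.N) (d : Hom R H) (τ₁' : G.N → H'.N) (d' : Hom R H')
    (h : Hom H H') : Prop :=
  h.toFun ∘ τ₁ = τ₁' ∧ h.toFun ∘ d.toFun = d'.toFun

open Classical in
/-- The candidate cone function `|G| → |G| ⊕ |R|`. -/
noncomputable def tauSum {Ω : Type u} {ar : Ω → ℕ} {L R G : TermGraph Ω ar}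
    (τ : L.N → R.N) (m : Hom L G) : G.N → G.N ⊕ R.N :=
  fun g => if h : ∃ l, m.toFun l = g then Sum.inr (τ h.choose) else Sum.inl g

/-- The candidate cone graph on `|G| ⊕ |R|`. -/
noncomputable def HSum {Ω : Type u} {ar : Ω → ℕ} {L R G : TermGraph Ω ar}
    (τ : L.N → R.N) (m : Hom L G) : TermGraph Ω ar where
  N := G.N ⊕ R.N
  label := Sum.elim G.label R.label
  succ := Sum.elim (fun g => (G.succ g).map (tauSum τ m))
    (fun r => (R.succ r).map Sum.inr)
  arity_eq := by rintro (g | r) <;> simp [G.arity_eq, R.arity_eq]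

/-- The inclusion `R → HSum` as a graph morphism. -/
noncomputable def dSum {Ω : Type u} {ar : Ω → ℕ} {L R G : TermGraph Ω ar}
    (τ : L.N → R.N) (m : Hom L G) : Hom R (HSum τ m) where
  toFun := Sum.inr
  label_eq := fun n ω h => h
  succ_eq := fun n ω _ => rfl

/-- If `(H, τ₁, d)` is a heterogeneous pushout of a rewrite rule without cloning
`T = (L, R, τ)` and a matching `m : L → G` (a graph morphism injective on nodes),
then `d : R → H` is injective on nodes, i.e. `d` is itself a matching of `R`. -/
theorem het_pushout_d_injective {Ω : Type u} {ar : Ω → ℕ} (L R G : TermGraph Ω ar)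
    (τ : L.N → R.N) (m : Hom L G) (hm : Function.Injective m.toFun)
    (H : TermGraph Ω ar) (τ₁ : G.N → H.N) (d : Hom R H)
    (hcone : IsHetCone L R G τ m H τ₁ d)
    (hinit : ∀ (H' : TermGraph Ω ar) (τ₁' : G.N → H'.N) (d' : Hom R H'),
      IsHetCone L R G τ m H' τ₁' d' →
      ∃! h : Hom H H', IsHetConeMorphism τ₁ d τ₁' d' h) :
    Function.Injective d.toFun := by
  classical
  have hcone' : IsHetCone L R G τ m (HSum τ m) (tauSum τ m) (dSum τ m) := by
    constructor
    · funext l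
      have hex : ∃ l', m.toFun l' = m.toFun l := ⟨l, rfl⟩
      have : hex.choose = l := hm hex.choose_spec
      simp [dSum, tauSum, Function.comp, dif_pos hex, this]
      rfl
    · intro g hg ω hω
      have hnex : ¬ ∃ l, m.toFun l = g := by
        intro ⟨l, hl⟩; exact hg ⟨l, hl⟩
      constructor
      · simp [HSum, tauSum, dif_neg hnex, hω]
      · simp [HSum, tauSum, dif_neg hnex]
  obtain ⟨h, ⟨_, hd⟩, _⟩ := hinit (HSum τ m) (tauSum τ m) (dSum τ m) hcone'
  intro a b hab
  have h1 : h.toFun (d.toFun a) = Sum.inr a := congrFun hd a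
  have h2 : h.toFun (d.toFun b) = Sum.inr b := congrFun hd b
  rw [hab, h2] at h1
  exact Sum.inr_injective h1.symm
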